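/- arXiv:2504.08191 — 2 statements merged into one kernel-verified Lean document; each statement's English description precedes it below -/
import Mathlib

section
/- For every z = (x_C, x_S, x_R) ∈ ℝ³, the iterated Lie bracket of f with [g_P, g_V] is given explicitly by [f, [g_P, g_V]](z) = (x_S (1 − x_S − x_R) ((β̂ − β)(c_I − c_P) + β c_V γ), 0, 0). -/
noncomputable section

/-- Drift vector field of the Mayer-form SIRI dynamics, `z = (x_C, x_S, x_R)`. -/
def fVec (cP cI γ : ℝ) (z : ℝ × ℝ × ℝ) : ℝ × ℝ × ℝ :=
  (cP * (z.2.1 + z.2.2) + cI * (1 - z.2.1 - z.2.2), 0, γ * (1 - z.2.1 - z.2.2))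

/-- Control vector field for the protection input. -/
def gPVec (β βh cP : ℝ) (z : ℝ × ℝ × ℝ) : ℝ × ℝ × ℝ :=
  (-(cP * (z.2.1 + z.2.2)), -(β * z.2.1 * (1 - z.2.1 - z.2.2)),
    -(βh * z.2.2 * (1 - z.2.1 - z.2.2)))

/-- Control vector field for the vaccination input. -/
def gVVec (cV : ℝ) (z : ℝ × ℝ × ℝ) : ℝ × ℝ × ℝ := (cV * z.2.1, -z.2.1, z.2.1)

/-- Lie bracket of two vector fields on `ℝ³`:
`[X, Y](z) = DY(z) X(z) − DX(z) Y(z)`, where `D` is the Fréchet derivative. -/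
def lieBr (X Y : ℝ × ℝ × ℝ → ℝ × ℝ × ℝ) (z : ℝ × ℝ × ℝ) : ℝ × ℝ × ℝ :=
  fderiv ℝ Y z (X z) - fderiv ℝ X z (Y z)

namespace SiriAux

abbrev V3 := ℝ × ℝ × ℝ

def LS : V3 →L[ℝ] ℝ := (ContinuousLinearMap.fst ℝ ℝ ℝ).comp (ContinuousLinearMap.snd ℝ ℝ (ℝ × ℝ))
def LR : V3 →L[ℝ] ℝ := (ContinuousLinearMap.snd ℝ ℝ ℝ).comp (ContinuousLinearMap.snd ℝ ℝ (ℝ × ℝ))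

@[simp] lemma LS_apply (v : V3) : LS v = v.2.1 := rfl
@[simp] lemma LR_apply (v : V3) : LR v = v.2.2 := rfl

lemma hS (z : V3) : HasFDerivAt (fun z : V3 => z.2.1) LS z := LS.hasFDerivAt
lemma hR (z : V3) : HasFDerivAt (fun z : V3 => z.2.2) LR z := LR.hasFDerivAt

lemma hw (z : V3) : HasFDerivAt (fun z : V3 => 1 - z.2.1 - z.2.2) ((0 - LS) - LR) z :=
  ((hasFDerivAt_const (1:ℝ) z).sub (hS z)).sub (hR z)

lemma fderiv_gV_apply (cV : ℝ) (z v : V3) :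
    fderiv ℝ (gVVec cV) z v = (cV * v.2.1, -v.2.1, v.2.1) := by
  have H : HasFDerivAt (gVVec cV) ((cV • LS).prod ((-LS).prod LS)) z := by
    unfold gVVec
    exact HasFDerivAt.prodMk ((hS z).const_mul cV) (HasFDerivAt.prodMk ((hS z).neg) (hS z))
  rw [H.fderiv]; simp

lemma fderiv_gP_apply (β βh cP : ℝ) (z v : V3) :
    fderiv ℝ (gPVec β βh cP) z v =
      (-(cP * (v.2.1 + v.2.2)),
        -(β * (v.2.1 * (1 - z.2.1 - z.2.2) - z.2.1 * (v.2.1 + v.2.2))),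
        -(βh * (v.2.2 * (1 - z.2.1 - z.2.2) - z.2.2 * (v.2.1 + v.2.2)))) := by
  have H' : HasFDerivAt (gPVec β βh cP)
      ((-(cP • (LS + LR))).prod
        ((-((β * z.2.1) • ((0 - LS) - LR) + (1 - z.2.1 - z.2.2) • (β • LS))).prod
          (-((βh * z.2.2) • ((0 - LS) - LR) + (1 - z.2.1 - z.2.2) • (βh • LR))))) z := by
    unfold gPVec
    exact HasFDerivAt.prodMk ((((hS z).add (hR z)).const_mul cP).neg)
      (HasFDerivAt.prodMk ((((hS z).const_mul β).mul (hw z)).neg)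
        ((((hR z).const_mul βh).mul (hw z)).neg))
  rw [H'.fderiv]
  simp [Prod.ext_iff, smul_eq_mul]
  constructor
  · ring
  constructor
  · ring
  · ring

lemma fderiv_f_apply (cP cI γ : ℝ) (z v : V3) :
    fderiv ℝ (fVec cP cI γ) z v =
      ((cP - cI) * (v.2.1 + v.2.2), 0, -(γ * (v.2.1 + v.2.2))) := by
  have H' : HasFDerivAt (fVec cP cI γ)
      ((cP • (LS + LR) + cI • ((0 - LS) - LR)).prod
        ((0 : V3 →L[ℝ] ℝ).prod (γ • ((0 - LS) - LR)))) z := by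
    unfold fVec
    exact HasFDerivAt.prodMk ((((hS z).add (hR z)).const_mul cP).add ((hw z).const_mul cI))
      (HasFDerivAt.prodMk (hasFDerivAt_const (0:ℝ) z) ((hw z).const_mul γ))
  rw [H'.fderiv]
  simp [Prod.ext_iff, smul_eq_mul]
  constructor
  · ring
  · ring

/-- explicit inner bracket -/
def Bfun (β βh cV : ℝ) (z : V3) : V3 :=
  (-(β * cV * (z.2.1 * (1 - z.2.1 - z.2.2))), 0,
    -((β - βh) * (z.2.1 * (1 - z.2.1 - z.2.2))))

lemma inner_bracket (β βh cP cV : ℝ) :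
    lieBr (gPVec β βh cP) (gVVec cV) = Bfun β βh cV := by
  funext z
  unfold lieBr Bfun
  rw [fderiv_gV_apply, fderiv_gP_apply]
  simp [gPVec, gVVec, Prod.ext_iff]
  refine ⟨by ring, by ring, by ring⟩

lemma fderiv_B_apply (β βh cV : ℝ) (z v : V3) :
    fderiv ℝ (Bfun β βh cV) z v =
      (-(β * cV * (v.2.1 * (1 - z.2.1 - z.2.2) - z.2.1 * (v.2.1 + v.2.2))), 0,
        -((β - βh) * (v.2.1 * (1 - z.2.1 - z.2.2) - z.2.1 * (v.2.1 + v.2.2)))) := by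
  have H' : HasFDerivAt (Bfun β βh cV)
      ((-((β * cV) • (z.2.1 • ((0 - LS) - LR) + (1 - z.2.1 - z.2.2) • LS))).prod
        ((0 : V3 →L[ℝ] ℝ).prod
          (-((β - βh) • (z.2.1 • ((0 - LS) - LR) + (1 - z.2.1 - z.2.2) • LS))))) z := by
    unfold Bfun
    exact HasFDerivAt.prodMk ((((hS z).mul (hw z)).const_mul (β * cV)).neg)
      (HasFDerivAt.prodMk (hasFDerivAt_const (0:ℝ) z)
        ((((hS z).mul (hw z)).const_mul (β - βh)).neg))
  rw [H'.fderiv]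
  simp [Prod.ext_iff, smul_eq_mul]
  constructor
  · ring
  · ring

end SiriAux

open SiriAux

/-- explicit formula for `[f, [g_P, g_V]]`. -/
theorem siri_lie_f_gPgV
    (β βh γ cP cV cI : ℝ)
    (hβ : 0 < β) (hβh : 0 < βh) (hγ : 0 < γ)
    (hcP : 0 < cP) (hcV : 0 < cV) (hcI : 0 < cI) :
    ∀ z : ℝ × ℝ × ℝ,
      lieBr (fVec cP cI γ) (lieBr (gPVec β βh cP) (gVVec cV)) z =
        (z.2.1 * (1 - z.2.1 - z.2.2) * ((βh - β) * (cI - cP) + β * cV * γ),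
          0, 0) := by
  intro z
  rw [inner_bracket]
  unfold lieBr
  rw [fderiv_B_apply, fderiv_f_apply]
  simp [fVec, Bfun, Prod.ext_iff]
  refine ⟨by ring, by ring⟩
end
end

section
/- (Second-order switching identity.) Fix real numbers u_P, u_V, and let z : ℝ → ℝ³ and λ : ℝ → ℝ³ be functions such that at some time t₀, z has derivative f(z(t₀)) + u_P · g_P(z(t₀)) + u_V · g_V(z(t₀)) and λ has derivative −(Df(z(t₀)) + u_P · Dg_P(z(t₀)) + u_V · Dg_V(z(t₀)))ᵀ λ(t₀), where ᵀ denotes the adjoint (transpose) with respect to the standard inner product ⟨·,·⟩ on ℝ³. Then the function t ↦ ⟨λ(t), [g_P, g_V](z(t))⟩ is differentiable at t₀ with derivative equal to ⟨λ(t₀), [f, [g_P, g_V]](z(t₀))⟩ + u_P · ⟨λ(t₀), [g_P, [g_P, g_V]](z(t₀))⟩ − u_V · ⟨λ(t₀), [g_P, g_V](z(t₀))⟩. -/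
noncomputable section

/-- Standard inner product on `ℝ³ = ℝ × ℝ × ℝ`. -/
def dot3 (a b : ℝ × ℝ × ℝ) : ℝ := a.1 * b.1 + a.2.1 * b.2.1 + a.2.2 * b.2.2

open ContinuousLinearMap

def πx : ℝ × ℝ × ℝ →L[ℝ] ℝ := fst ℝ ℝ (ℝ × ℝ)
def πs : ℝ × ℝ × ℝ →L[ℝ] ℝ := (fst ℝ ℝ ℝ).comp (snd ℝ ℝ (ℝ × ℝ))
def πr : ℝ × ℝ × ℝ →L[ℝ] ℝ := (snd ℝ ℝ ℝ).comp (snd ℝ ℝ (ℝ × ℝ))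

lemma hs (z : ℝ × ℝ × ℝ) : HasFDerivAt (fun z : ℝ × ℝ × ℝ => z.2.1) πs z :=
  (hasFDerivAt_fst.comp z hasFDerivAt_snd)
lemma hr (z : ℝ × ℝ × ℝ) : HasFDerivAt (fun z : ℝ × ℝ × ℝ => z.2.2) πr z :=
  (hasFDerivAt_snd.comp z hasFDerivAt_snd)

lemma hd_gV (cV : ℝ) (z : ℝ × ℝ × ℝ) :
    HasFDerivAt (gVVec cV) ((cV • πs).prod ((-πs).prod πs)) z := by
  apply HasFDerivAt.prodMk ((hs z).const_mul cV)
  exact HasFDerivAt.prodMk (hs z).neg (hs z)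

lemma fd_gV (cV : ℝ) (z v : ℝ × ℝ × ℝ) :
    fderiv ℝ (gVVec cV) z v = (cV * v.2.1, -v.2.1, v.2.1) := by
  rw [(hd_gV cV z).fderiv]
  simp [πs, πr]

lemma hd_f (cP cI γ : ℝ) (z : ℝ × ℝ × ℝ) :
    HasFDerivAt (fVec cP cI γ)
      (((cP • (πs + πr)) + (cI • (0 - πs - πr))).prod
        ((0 : ℝ × ℝ × ℝ →L[ℝ] ℝ).prod (γ • (0 - πs - πr)))) z := by
  apply HasFDerivAt.prodMk
  · exact (((hs z).add (hr z)).const_mul cP).add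
      ((((hasFDerivAt_const (1:ℝ) z).sub (hs z)).sub (hr z)).const_mul cI)
  exact HasFDerivAt.prodMk (hasFDerivAt_const (0:ℝ) z)
    ((((hasFDerivAt_const (1:ℝ) z).sub (hs z)).sub (hr z)).const_mul γ)

lemma fd_f (cP cI γ : ℝ) (z v : ℝ × ℝ × ℝ) :
    fderiv ℝ (fVec cP cI γ) z v =
      (cP * (v.2.1 + v.2.2) + cI * (-v.2.1 - v.2.2), 0, γ * (-v.2.1 - v.2.2)) := by
  rw [(hd_f cP cI γ z).fderiv]
  simp [πs, πr]
  ring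

lemma hd_gP (β βh cP : ℝ) (z : ℝ × ℝ × ℝ) :
    HasFDerivAt (gPVec β βh cP)
      ((-(cP • (πs + πr))).prod
        ((-((β * z.2.1) • (0 - πs - πr) + (1 - z.2.1 - z.2.2) • (β • πs))).prod
         (-((βh * z.2.2) • (0 - πs - πr) + (1 - z.2.1 - z.2.2) • (βh • πr))))) z := by
  apply HasFDerivAt.prodMk (((hs z).add (hr z)).const_mul cP).neg
  apply HasFDerivAt.prodMk
  · exact (HasFDerivAt.mul ((hs z).const_mul β)
      (((hasFDerivAt_const (1:ℝ) z).sub (hs z)).sub (hr z))).neg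
  · exact (HasFDerivAt.mul ((hr z).const_mul βh)
      (((hasFDerivAt_const (1:ℝ) z).sub (hs z)).sub (hr z))).neg

lemma fd_gP (β βh cP : ℝ) (z v : ℝ × ℝ × ℝ) :
    fderiv ℝ (gPVec β βh cP) z v =
      (-(cP * (v.2.1 + v.2.2)),
       -(β * ((1 - 2 * z.2.1 - z.2.2) * v.2.1 - z.2.1 * v.2.2)),
       -(βh * (-(z.2.2 * v.2.1) + (1 - z.2.1 - 2 * z.2.2) * v.2.2))) := by
  rw [(hd_gP β βh cP z).fderiv]
  simp [πs, πr]
  constructor <;> [ring; constructor <;> ring]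

def hE (β βh cV : ℝ) (z : ℝ × ℝ × ℝ) : ℝ × ℝ × ℝ :=
  (-(cV * β * (z.2.1 * (1 - z.2.1 - z.2.2))), 0,
    (βh - β) * (z.2.1 * (1 - z.2.1 - z.2.2)))

lemma lie_gPgV (β βh cP cV : ℝ) :
    lieBr (gPVec β βh cP) (gVVec cV) = hE β βh cV := by
  funext z
  unfold lieBr
  rw [fd_gV, fd_gP]
  unfold gPVec gVVec hE
  simp only [Prod.mk_sub_mk]
  refine Prod.ext (by ring) (Prod.ext (by ring) (by ring))

lemma hd_hE (β βh cV : ℝ) (z : ℝ × ℝ × ℝ) :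
    HasFDerivAt (hE β βh cV)
      ((-((cV * β) • (z.2.1 • (0 - πs - πr) + (1 - z.2.1 - z.2.2) • πs))).prod
        ((0 : ℝ × ℝ × ℝ →L[ℝ] ℝ).prod
          ((βh - β) • (z.2.1 • (0 - πs - πr) + (1 - z.2.1 - z.2.2) • πs)))) z := by
  have hw : HasFDerivAt (fun z : ℝ × ℝ × ℝ => z.2.1 * (1 - z.2.1 - z.2.2))
      (z.2.1 • (0 - πs - πr) + (1 - z.2.1 - z.2.2) • πs) z :=
    (hs z).mul (((hasFDerivAt_const (1:ℝ) z).sub (hs z)).sub (hr z))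
  exact HasFDerivAt.prodMk (hw.const_mul (cV * β)).neg
    (HasFDerivAt.prodMk (hasFDerivAt_const (0:ℝ) z) (hw.const_mul (βh - β)))

lemma fd_hE (β βh cV : ℝ) (z v : ℝ × ℝ × ℝ) :
    fderiv ℝ (hE β βh cV) z v =
      (-(cV * β * ((1 - 2 * z.2.1 - z.2.2) * v.2.1 - z.2.1 * v.2.2)), 0,
        (βh - β) * ((1 - 2 * z.2.1 - z.2.2) * v.2.1 - z.2.1 * v.2.2)) := by
  rw [(hd_hE β βh cV z).fderiv]
  simp [πs, πr]
  constructor <;> ring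


/-- second-order switching identity: under the same controlled and
adjoint dynamics as in Statement 18,
`d/dt ⟨λ, [g_P, g_V](z)⟩ = ⟨λ, [f, [g_P, g_V]](z)⟩ + u_P ⟨λ, [g_P, [g_P, g_V]](z)⟩
 − u_V ⟨λ, [g_P, g_V](z)⟩` at `t₀`. -/
theorem siri_phiV_second_derivative
    (β βh γ cP cV cI : ℝ)
    (hβ : 0 < β) (hβh : 0 < βh) (hγ : 0 < γ)
    (hcP : 0 < cP) (hcV : 0 < cV) (hcI : 0 < cI)
    (uP uV t₀ : ℝ)
    (z lam : ℝ → ℝ × ℝ × ℝ) (lam' : ℝ × ℝ × ℝ)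
    (hz : HasDerivAt z
      (fVec cP cI γ (z t₀) + uP • gPVec β βh cP (z t₀) + uV • gVVec cV (z t₀)) t₀)
    (hlam : HasDerivAt lam lam' t₀)
    (hlam' : ∀ v : ℝ × ℝ × ℝ,
      dot3 lam' v =
        -(dot3 (lam t₀)
          (fderiv ℝ (fVec cP cI γ) (z t₀) v +
            uP • fderiv ℝ (gPVec β βh cP) (z t₀) v +
            uV • fderiv ℝ (gVVec cV) (z t₀) v))) :
    HasDerivAt (fun t => dot3 (lam t) (lieBr (gPVec β βh cP) (gVVec cV) (z t)))
      (dot3 (lam t₀) (lieBr (fVec cP cI γ) (lieBr (gPVec β βh cP) (gVVec cV)) (z t₀)) +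
        uP * dot3 (lam t₀)
          (lieBr (gPVec β βh cP) (lieBr (gPVec β βh cP) (gVVec cV)) (z t₀)) -
        uV * dot3 (lam t₀) (lieBr (gPVec β βh cP) (gVVec cV) (z t₀))) t₀ := by
  set zd := fVec cP cI γ (z t₀) + uP • gPVec β βh cP (z t₀) + uV • gVVec cV (z t₀) with hzd
  -- derivative of t ↦ hE (z t)
  have hB : HasDerivAt (fun t => hE β βh cV (z t)) (fderiv ℝ (hE β βh cV) (z t₀) zd) t₀ := by
    have h := hd_hE β βh cV (z t₀)
    rw [h.fderiv]
    exact h.comp_hasDerivAt t₀ hz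
  rw [fd_hE] at hB
  -- component derivatives
  have h1 : HasDerivAt (fun t => (lam t).1) lam'.1 t₀ := by
    exact (πx.hasFDerivAt.comp_hasDerivAt t₀ hlam)
  have h2 : HasDerivAt (fun t => (lam t).2.1) lam'.2.1 t₀ := by
    exact (πs.hasFDerivAt.comp_hasDerivAt t₀ hlam)
  have h3 : HasDerivAt (fun t => (lam t).2.2) lam'.2.2 t₀ := by
    exact (πr.hasFDerivAt.comp_hasDerivAt t₀ hlam)
  have k1 : HasDerivAt (fun t => (hE β βh cV (z t)).1)
      (-(cV * β * ((1 - 2 * (z t₀).2.1 - (z t₀).2.2) * zd.2.1 - (z t₀).2.1 * zd.2.2))) t₀ := by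
    exact (πx.hasFDerivAt.comp_hasDerivAt t₀ hB)
  have k2 : HasDerivAt (fun t => (hE β βh cV (z t)).2.1) (0 : ℝ) t₀ := by
    exact (πs.hasFDerivAt.comp_hasDerivAt t₀ hB)
  have k3 : HasDerivAt (fun t => (hE β βh cV (z t)).2.2)
      ((βh - β) * ((1 - 2 * (z t₀).2.1 - (z t₀).2.2) * zd.2.1 - (z t₀).2.1 * zd.2.2)) t₀ := by
    exact (πr.hasFDerivAt.comp_hasDerivAt t₀ hB)
  have hprod := ((h1.mul k1).add (h2.mul k2)).add (h3.mul k3)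
  rw [lie_gPgV]
  have hfun : (fun t => dot3 (lam t) (hE β βh cV (z t))) =
      (fun t => (lam t).1 * (hE β βh cV (z t)).1 + (lam t).2.1 * (hE β βh cV (z t)).2.1
        + (lam t).2.2 * (hE β βh cV (z t)).2.2) := by
    funext t; simp [dot3]
  rw [hfun]
  refine hprod.congr_deriv (Eq.symm ?_)
  have key := hlam' (hE β βh cV (z t₀))
  rw [fd_f, fd_gP, fd_gV] at key
  unfold lieBr
  simp only [fd_hE, fd_f, fd_gP, fd_gV]
  simp only [hzd, dot3, hE, fVec, gPVec, gVVec, Prod.fst_add, Prod.snd_add,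
    Prod.smul_fst, Prod.smul_snd, smul_eq_mul, Prod.mk_sub_mk] at key ⊢
  linear_combination -key
end
end
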